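/- For every y ≥ 1, one has ϑ₂(y) < 2 e^{−πy/4} + 2 · (1 + 0.00001) e^{−9πy/4}. -/

import Mathlib

/-- The Jacobi theta function ϑ₂, defined for real `y` by
`ϑ₂(y) = ∑_{n ∈ ℤ} e^{−π y (n + 1/2)²}`. -/
noncomputable def theta2 (y : ℝ) : ℝ :=
  ∑' n : ℤ, Real.exp (-Real.pi * y * ((n : ℝ) + 1/2) ^ 2)

theorem theta2_upper_bound (y : ℝ) (hy : 1 ≤ y) :
    theta2 y < 2 * Real.exp (-Real.pi * y / 4) +
      2 * (1 + 0.00001) * Real.exp (-9 * Real.pi * y / 4) := by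
  have hpi := Real.pi_gt_three
  have hc : (3 : ℝ) ≤ Real.pi * y := by nlinarith
  set c : ℝ := Real.pi * y with hcdef
  set g : ℕ → ℝ := fun n => Real.exp (-c * ((n : ℝ) + 1/2) ^ 2) with hg
  -- summability of g
  have hsum : Summable g := by
    have hb : Summable (fun n : ℕ => Real.exp (-c/4) * Real.exp (-c) ^ n) :=
      Summable.mul_left _ (summable_geometric_of_lt_one (Real.exp_pos _).le
        (Real.exp_lt_one_iff.mpr (by linarith)))
    refine Summable.of_nonneg_of_le (fun n => (Real.exp_pos _).le) (fun n => ?_) hb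
    show Real.exp (-c * ((n : ℝ) + 1/2) ^ 2) ≤ _
    rw [← Real.exp_nat_mul, ← Real.exp_add]
    apply Real.exp_le_exp.mpr
    have : (0:ℝ) ≤ n := Nat.cast_nonneg n
    nlinarith [sq_nonneg ((n:ℝ))]
  have hsymm : ∀ n : ℕ, Real.exp (-c * (((-(n+1) : ℤ) : ℝ) + 1/2) ^ 2) = g n := by
    intro n
    simp only [hg]
    congr 1
    push_cast
    ring
  have hθ : theta2 y = 2 * ∑' n : ℕ, g n := by
    have hrw : ∀ n : ℤ, Real.exp (-Real.pi * y * ((n : ℝ) + 1/2) ^ 2)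
        = Real.exp (-c * ((n : ℝ) + 1/2) ^ 2) := by
      intro n; rw [hcdef]; ring_nf
    rw [theta2, tsum_congr hrw]
    rw [tsum_of_nat_of_neg_add_one (by exact_mod_cast hsum) (hsum.congr fun n => (hsymm n).symm)]
    have h1 : (∑' n : ℕ, Real.exp (-c * (((n:ℤ) : ℝ) + 1/2) ^ 2)) = ∑' n : ℕ, g n := by
      apply tsum_congr; intro n; simp [hg]
    have h2 : (∑' n : ℕ, Real.exp (-c * (((-(n+1) : ℤ)) + 1/2) ^ 2)) = ∑' n : ℕ, g n := by
      apply tsum_congr; intro n; exact_mod_cast hsymm n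
    push_cast at h1 h2 ⊢
    first
      | (rw [h1, h2]; ring)
      | ring
  -- split off first two terms
  have hsplit : ∑' n : ℕ, g n = g 0 + (g 1 + ∑' n : ℕ, g (n + 2)) := by
    rw [Summable.tsum_eq_zero_add hsum, Summable.tsum_eq_zero_add (by exact (summable_nat_add_iff 1).mpr hsum)]
    try simp [add_assoc]
  -- bound on tail terms
  have hEpos : (0:ℝ) < Real.exp (-9 * Real.pi * y / 4) := Real.exp_pos _
  have htail_le : ∀ n : ℕ, g (n + 2) ≤
      Real.exp (-9 * Real.pi * y / 4) * Real.exp (-(12:ℝ)) ^ (n + 1) := by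
    intro n
    rw [← Real.exp_nat_mul, ← Real.exp_add, hg]
    apply Real.exp_le_exp.mpr
    have hn : (0:ℝ) ≤ n := Nat.cast_nonneg n
    push_cast
    -- -c*(n+5/2)^2 ≤ -9πy/4 - 12(n+1),  c = πy ≥ 3
    -- c*(n+5/2)^2 = c*(n²+5n+25/4) = (9/4)c + c*(n²+5n+4) ≥ 9πy/4 + 3*(4(n+1))
    have h1 : (3:ℝ) * ((n:ℝ)^2 + 5*n + 4) ≤ c * ((n:ℝ)^2 + 5*n + 4) := by
      apply mul_le_mul_of_nonneg_right (by linarith) (by nlinarith)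
    nlinarith [sq_nonneg ((n:ℝ)), sq_nonneg ((n:ℝ)+1)]
  have hgeo : Summable (fun n : ℕ => Real.exp (-9 * Real.pi * y / 4) *
      Real.exp (-(12:ℝ)) ^ (n + 1)) := by
    apply Summable.mul_left
    exact ((summable_geometric_of_lt_one (Real.exp_pos _).le
      (Real.exp_lt_one_iff.mpr (by norm_num))).comp_injective (add_left_injective 1))
  have htail : ∑' n : ℕ, g (n + 2) ≤
      Real.exp (-9 * Real.pi * y / 4) * (Real.exp (-(12:ℝ)) / (1 - Real.exp (-(12:ℝ)))) := by
    calc ∑' n : ℕ, g (n + 2) ≤ ∑' n : ℕ, Real.exp (-9 * Real.pi * y / 4) *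
          Real.exp (-(12:ℝ)) ^ (n + 1) :=
        Summable.tsum_le_tsum htail_le ((summable_nat_add_iff 2).mpr hsum) hgeo
      _ = Real.exp (-9 * Real.pi * y / 4) * ∑' n : ℕ, Real.exp (-(12:ℝ)) ^ (n + 1) := by
        rw [tsum_mul_left]
      _ ≤ _ := by
        apply mul_le_mul_of_nonneg_left _ hEpos.le
        have h1 : Real.exp (-(12:ℝ)) < 1 := Real.exp_lt_one_iff.mpr (by norm_num)
        set r := Real.exp (-(12:ℝ)) with hr
        have hr0 : (0:ℝ) ≤ r := (Real.exp_pos _).le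
        have hgs : Summable (fun n : ℕ => r ^ n) := summable_geometric_of_lt_one hr0 h1
        have hts : ∑' n : ℕ, r ^ n = (1 - r)⁻¹ := tsum_geometric_of_lt_one hr0 h1
        have hsplit2 : ∑' n : ℕ, r ^ n = r ^ 0 + ∑' n : ℕ, r ^ (n + 1) :=
          Summable.tsum_eq_zero_add hgs
        have h1r : (0:ℝ) < 1 - r := by linarith
        have : ∑' n : ℕ, r ^ (n + 1) = (1 - r)⁻¹ - 1 := by
          rw [← hts, hsplit2]; ring
        rw [this, div_eq_mul_inv]
        have : (1 - r)⁻¹ - 1 = r * (1-r)⁻¹ := by field_simp; ring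
        rw [this]
  -- numeric bound
  have hnum : Real.exp (-(12:ℝ)) / (1 - Real.exp (-(12:ℝ))) < 0.00001 := by
    have h12 : (150094 : ℝ) < Real.exp 12 := by
      have h := Real.exp_one_gt_d9
      have : (2.7182818283 : ℝ) ^ (12:ℕ) ≤ (Real.exp 1) ^ (12:ℕ) := by
        apply pow_le_pow_left₀ (by norm_num) h.le
      calc (150094 : ℝ) < (2.7182818283 : ℝ) ^ (12:ℕ) := by norm_num
        _ ≤ (Real.exp 1) ^ (12:ℕ) := this
        _ = Real.exp 12 := by rw [← Real.exp_nat_mul]; norm_num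
    have he : Real.exp (-(12:ℝ)) < 6.7e-6 := by
      rw [Real.exp_neg]
      rw [inv_lt_comm₀ (Real.exp_pos _) (by norm_num)]
      calc (6.7e-6 : ℝ)⁻¹ < 150094 := by norm_num
        _ < Real.exp 12 := h12
    have he0 : (0:ℝ) < Real.exp (-(12:ℝ)) := Real.exp_pos _
    rw [div_lt_iff₀ (by linarith)]
    nlinarith
  -- finish
  have hg0 : g 0 = Real.exp (-Real.pi * y / 4) := by
    simp only [hg]; norm_num; ring_nf; rw [hcdef]
  have hg1 : g 1 = Real.exp (-9 * Real.pi * y / 4) := by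
    simp only [hg]; norm_num; ring_nf; rw [hcdef]
  have htail' : ∑' n : ℕ, g (n + 2) < 0.00001 * Real.exp (-9 * Real.pi * y / 4) := by
    calc ∑' n : ℕ, g (n + 2) ≤ _ := htail
      _ < 0.00001 * Real.exp (-9 * Real.pi * y / 4) := by
        rw [mul_comm]
        exact mul_lt_mul_of_pos_right hnum hEpos
  rw [hθ, hsplit, hg0, hg1]
  nlinarith [htail', hEpos]
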